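/- (Proposition 1, mean-parameter version with low-rank ν.) Suppose: (a) W ∈ ℝ^{n×(1+q)} satisfies det(Wᵀ D) ≠ 0 where D = [X | C], and η and η* are both W-balanced with the same vector b; (b) η(i)(j) = Σ_l θη(i)(l) ψ(l)(j) and η*(i)(j) = Σ_l θη*(i)(l) ψ(l)(j) with ψ orthonormal on the grid; (c) the n × (1+q+L) design matrix [X | C | θη] has full column rank; (d) ν and ν* lie in the span of ψ. If the mediator means of (α, ξ, η) and (α*, ξ*, η*) agree for all i and j, and the outcome means of (β, γ, ζ, ν, η) and (β*, γ*, ζ*, ν*, η*) agree for all i and all m : Fin p → ℝ, then α = α*, ξ = ξ*, η = η*, β = β*, γ = γ*, ζ = ζ*, and ν = ν*. -/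

import Mathlib

open Matrix

/-- **Proposition 1 (joint identifiability of BASMU, mean-parameter version, low-rank ν).**
Under (a) `det(Wᵀ[X|C]) ≠ 0` with `η`, `η*` both `W`-balanced with the same `b`;
(b) low-rank individual effects with an orthonormal basis `ψ`; (c) full column rank of
the design matrix `[X | C | θη]`; and (d) `ν`, `ν*` in the span of `ψ`, equality of all
mediator means and all outcome means forces all parameters to coincide. -/
theorem basmu_jointly_identifiable
    {n p q L : ℕ} (lam : Fin p → ℝ) (X : Fin n → ℝ) (C : Fin n → Fin q → ℝ)
    (W : Matrix (Fin n) (Fin (q + 1)) ℝ) (b : Fin (q + 1) → ℝ)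
    (hdet : (Wᵀ * Matrix.of (fun i => Fin.cons (X i) (C i))).det ≠ 0)
    (ψ : Fin L → Fin p → ℝ)
    (hortho : ∀ l l' : Fin L,
      (∑ j, ψ l j * ψ l' j * lam j) = if l = l' then (1 : ℝ) else 0)
    (α α' : Fin p → ℝ) (ξ ξ' : Fin q → Fin p → ℝ) (η η' : Fin n → Fin p → ℝ)
    (θη θη' : Fin n → Fin L → ℝ)
    (hη : ∀ i j, η i j = ∑ l, θη i l * ψ l j)
    (hη' : ∀ i j, η' i j = ∑ l, θη' i l * ψ l j)
    (hbal : ∀ (j : Fin p) (k : Fin (q + 1)), ∑ i, W i k * η i j = b k)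
    (hbal' : ∀ (j : Fin p) (k : Fin (q + 1)), ∑ i, W i k * η' i j = b k)
    (hrank : LinearIndependent ℝ
      (Fin.append (Fin.cons X (fun k i => C i k)) (fun l i => θη i l)
        : Fin ((q + 1) + L) → Fin n → ℝ))
    (β β' : Fin p → ℝ) (γ γ' : ℝ) (ζ ζ' : Fin q → ℝ) (ν ν' : Fin p → ℝ)
    (θν θν' : Fin L → ℝ)
    (hν : ∀ j, ν j = ∑ l, θν l * ψ l j)
    (hν' : ∀ j, ν' j = ∑ l, θν' l * ψ l j)
    (hMmean : ∀ (i : Fin n) (j : Fin p),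
      α j * X i + (∑ k, ξ k j * C i k) + η i j
        = α' j * X i + (∑ k, ξ' k j * C i k) + η' i j)
    (hYmean : ∀ (i : Fin n) (mVal : Fin p → ℝ),
      (∑ j, β j * mVal j) + γ * X i + (∑ k, ζ k * C i k) + (∑ j, ν j * η i j * lam j)
        = (∑ j, β' j * mVal j) + γ' * X i + (∑ k, ζ' k * C i k)
          + (∑ j, ν' j * η' i j * lam j)) :
    α = α' ∧ ξ = ξ' ∧ η = η' ∧ β = β' ∧ γ = γ' ∧ ζ = ζ' ∧ ν = ν' := by
  classical
  set D : Matrix (Fin n) (Fin (q+1)) ℝ := Matrix.of (fun i => Fin.cons (X i) (C i)) with hDdef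
  -- key orthonormality extraction
  have key : ∀ (c d : Fin L → ℝ),
      (∑ j, (∑ l, c l * ψ l j) * (∑ l, d l * ψ l j) * lam j) = ∑ l, c l * d l := by
    intro c d
    have h1 : ∀ j : Fin p, (∑ l, c l * ψ l j) * (∑ l, d l * ψ l j) * lam j
        = ∑ l, ∑ l', c l * d l' * (ψ l j * ψ l' j * lam j) := by
      intro j
      rw [Finset.sum_mul_sum, Finset.sum_mul]
      refine Finset.sum_congr rfl fun l _ => ?_
      rw [Finset.sum_mul]
      exact Finset.sum_congr rfl fun l' _ => by ring
    simp_rw [h1]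
    rw [Finset.sum_comm]
    refine Finset.sum_congr rfl fun l _ => ?_
    rw [Finset.sum_comm]
    have h2 : ∀ l', (∑ j, c l * d l' * (ψ l j * ψ l' j * lam j))
        = c l * d l' * (if l = l' then (1:ℝ) else 0) := by
      intro l'
      rw [← Finset.mul_sum, hortho]
    simp_rw [h2]
    simp [mul_ite]
  -- solving via the nonsingular balancing matrix
  have hsolve : ∀ v : Fin (q+1) → ℝ, (Wᵀ * D).mulVec v = 0 → v = 0 := by
    intro v hv
    have hinv := Matrix.nonsing_inv_mul (Wᵀ * D) (isUnit_iff_ne_zero.mpr hdet)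
    have h1 : ((Wᵀ * D)⁻¹ * (Wᵀ * D)).mulVec v = v := by rw [hinv, Matrix.one_mulVec]
    rw [← Matrix.mulVec_mulVec, hv, Matrix.mulVec_zero] at h1
    exact h1.symm
  have hmed : ∀ j : Fin p,
      (Fin.cons (α j - α' j) (fun k => ξ k j - ξ' k j) : Fin (q+1) → ℝ) = 0 := by
    intro j
    apply hsolve
    funext k
    have hcompute : (Wᵀ * D).mulVec (Fin.cons (α j - α' j) (fun k => ξ k j - ξ' k j)) k
        = ∑ i, W i k * ((α j - α' j) * X i + ∑ kk, (ξ kk j - ξ' kk j) * C i kk) := by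
      simp only [Matrix.mulVec, Matrix.mul_apply, Matrix.transpose_apply, dotProduct,
        hDdef, Matrix.of_apply]
      simp_rw [Finset.sum_mul]
      rw [Finset.sum_comm]
      refine Finset.sum_congr rfl fun i _ => ?_
      rw [Fin.sum_univ_succ]
      simp only [Fin.cons_zero, Fin.cons_succ]
      rw [mul_add, Finset.mul_sum]
      congr 1
      · ring
      · exact Finset.sum_congr rfl fun kk _ => by ring
    rw [hcompute]
    have hterm : ∀ i, W i k * ((α j - α' j) * X i + ∑ kk, (ξ kk j - ξ' kk j) * C i kk)
        = W i k * η' i j - W i k * η i j := by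
      intro i
      have h := hMmean i j
      have hsub : (∑ kk, (ξ kk j - ξ' kk j) * C i kk)
          = (∑ kk, ξ kk j * C i kk) - ∑ kk, ξ' kk j * C i kk := by
        rw [← Finset.sum_sub_distrib]
        exact Finset.sum_congr rfl fun kk _ => by ring
      have hsub2 : (α j - α' j) * X i + ∑ kk, (ξ kk j - ξ' kk j) * C i kk = η' i j - η i j := by
        rw [hsub]; linarith
      rw [hsub2]; ring
    simp_rw [hterm]
    rw [Finset.sum_sub_distrib, hbal, hbal']
    simp
  have hα : α = α' := by
    funext j
    have h := congrFun (hmed j) 0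
    simp only [Fin.cons_zero, Pi.zero_apply] at h
    linarith
  have hξ : ξ = ξ' := by
    funext kk j
    have h := congrFun (hmed j) kk.succ
    simp only [Fin.cons_succ, Pi.zero_apply] at h
    linarith
  have hηeq : η = η' := by
    funext i j
    have h := hMmean i j
    rw [hα, hξ] at h
    linarith
  -- extracting basis coefficients
  have hsψ : ∀ (l : Fin L) (j : Fin p), (∑ l', (Pi.single l 1 : Fin L → ℝ) l' * ψ l' j) = ψ l j := by
    intro l j
    simp [Pi.single_apply, ite_mul]
  have hsingle : ∀ (l : Fin L) (c : Fin L → ℝ), (∑ l', c l' * (Pi.single l 1 : Fin L → ℝ) l') = c l := by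
    intro l c
    simp [Pi.single_apply, mul_ite]
  have hθη : θη = θη' := by
    funext i l
    have e1 := key (θη i) (Pi.single l 1)
    have e2 := key (θη' i) (Pi.single l 1)
    simp_rw [hsψ, hsingle] at e1 e2
    simp_rw [← hη] at e1
    simp_rw [← hη'] at e2
    calc θη i l = ∑ j, η i j * ψ l j * lam j := e1.symm
      _ = ∑ j, η' i j * ψ l j * lam j := by rw [hηeq]
      _ = θη' i l := e2
  -- n is positive
  have hn : 0 < n := by
    rcases Nat.eq_zero_or_pos n with h0 | h
    · exfalso
      apply hdet
      have hz : Wᵀ * D = 0 := by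
        subst h0
        ext k k'
        simp [Matrix.mul_apply]
      rw [hz, Matrix.det_zero]
    · exact h
  have i0 : Fin n := ⟨0, hn⟩
  have hβsum : ∀ m : Fin p → ℝ, ∑ j, β j * m j = ∑ j, β' j * m j := by
    intro m
    have h1 := hYmean i0 m
    have h2 := hYmean i0 0
    simp only [Pi.zero_apply, mul_zero, Finset.sum_const_zero, zero_add] at h2
    linarith
  have hβ : β = β' := by
    funext j
    have h := hβsum (Pi.single j 1)
    simpa [Pi.single_apply, mul_ite] using h
  -- quadratic terms
  have hquad : ∀ i, ∑ j, ν j * η i j * lam j = ∑ l, θν l * θη i l := by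
    intro i
    have h := key θν (θη i)
    simp_rw [← hν, ← hη] at h
    exact h
  have hquad' : ∀ i, ∑ j, ν' j * η' i j * lam j = ∑ l, θν' l * θη i l := by
    intro i
    have h := key θν' (θη' i)
    simp_rw [← hν', ← hη'] at h
    rw [h, hθη]
  have houtcome : ∀ i, (γ - γ') * X i + (∑ kk, (ζ kk - ζ' kk) * C i kk)
      + ∑ l, (θν l - θν' l) * θη i l = 0 := by
    intro i
    have h := hYmean i 0
    simp only [Pi.zero_apply, mul_zero, Finset.sum_const_zero, zero_add] at h
    rw [hquad i, hquad' i] at h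
    have e1 : (∑ kk, (ζ kk - ζ' kk) * C i kk)
        = (∑ kk, ζ kk * C i kk) - ∑ kk, ζ' kk * C i kk := by
      rw [← Finset.sum_sub_distrib]
      exact Finset.sum_congr rfl fun kk _ => by ring
    have e2 : (∑ l, (θν l - θν' l) * θη i l)
        = (∑ l, θν l * θη i l) - ∑ l, θν' l * θη i l := by
      rw [← Finset.sum_sub_distrib]
      exact Finset.sum_congr rfl fun l _ => by ring
    rw [e1, e2]
    linarith
  have hall := Fintype.linearIndependent_iff.mp hrank
      (Fin.append (Fin.cons (γ - γ') (fun kk => ζ kk - ζ' kk)) (fun l => θν l - θν' l))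
      (by
        funext i
        simp only [Finset.sum_apply, Pi.smul_apply, smul_eq_mul, Pi.zero_apply]
        rw [Fin.sum_univ_add]
        simp only [Fin.append_left, Fin.append_right]
        rw [Fin.sum_univ_succ]
        simp only [Fin.cons_zero, Fin.cons_succ]
        have h := houtcome i
        linarith)
  have hγ : γ = γ' := by
    have h := hall (Fin.castAdd L 0)
    rw [Fin.append_left] at h
    simp only [Fin.cons_zero] at h
    linarith
  have hζ : ζ = ζ' := by
    funext kk
    have h := hall (Fin.castAdd L kk.succ)
    rw [Fin.append_left] at h
    simp only [Fin.cons_succ] at h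
    linarith
  have hθν : θν = θν' := by
    funext l
    have h := hall (Fin.natAdd (q+1) l)
    rw [Fin.append_right] at h
    linarith
  have hνeq : ν = ν' := by
    funext j
    rw [hν, hν', hθν]
  exact ⟨hα, hξ, hηeq, hβ, hγ, hζ, hνeq⟩
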